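/- Fix θ > 0, let g be as in the steepest descent analysis, and for fixed y > 0 define h(y,k) = g(θ-y, y) - g(θ-y+k, y). Then h(y,0) = 0, ∂h/∂k (y,k) = -Σ_{n=0}^∞ ( (θ+n)(y² - (k-y)²) + (y-k)³ + y²(y-k) ) / ( (θ+n)² ((θ+n-y+k)² + y²) ), and h(y,·) is strictly decreasing on [0,y]. -/

import Mathlib

/-- The digamma function `Ψ(x) = d/dx ln Γ(x)`. -/
noncomputable def digamma (x : ℝ) : ℝ := deriv (fun t => Real.log (Real.Gamma t)) x

/-- `κ_θ = Ψ'(θ)`. -/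
noncomputable def kappa (θ : ℝ) : ℝ := deriv digamma θ

/-- `f_θ = θΨ'(θ) - Ψ(θ)`. -/
noncomputable def fTheta (θ : ℝ) : ℝ := θ * deriv digamma θ - digamma θ

/-- `g(x,y) = Re(ln Γ(x+iy)) + f_θ x - (κ_θ/2)(x² - y²)`. -/
noncomputable def gFun (θ x y : ℝ) : ℝ :=
  (Complex.log (Complex.Gamma ((x : ℂ) + (y : ℂ) * Complex.I))).re
    + fTheta θ * x - kappa θ / 2 * (x ^ 2 - y ^ 2)


/-- `h(y,k) = g(θ-y, y) - g(θ-y+k, y)`. -/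
noncomputable def hFun (θ y k : ℝ) : ℝ := gFun θ (θ - y) y - gFun θ (θ - y + k) y


open Filter Topology Finset


open Filter Topology Finset

lemma add_nat_ge {a : ℝ} (ha : 0 < a) (j : ℕ) : min a 1 * (1 + j) ≤ a + j := by
  have h1 : min a 1 ≤ a := min_le_left _ _
  have h2 : min a 1 ≤ 1 := min_le_right _ _
  have h3 : (0:ℝ) ≤ j := Nat.cast_nonneg j
  nlinarith

lemma summable_one_div_sq : Summable (fun j : ℕ => 1 / ((j:ℝ) + 1) ^ 2) := by
  have := Real.summable_one_div_nat_pow.mpr (le_refl 2)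
  have h := (summable_nat_add_iff 1).mpr this
  refine h.congr fun j => ?_
  push_cast
  ring

lemma summable_inv_sq_add {a : ℝ} (ha : 0 < a) : Summable (fun j : ℕ => 1 / (a + j) ^ 2) := by
  have hm : 0 < min a 1 := lt_min ha one_pos
  refine Summable.of_nonneg_of_le (fun j => by positivity) (fun j => ?_)
    ((summable_one_div_sq).mul_left ((min a 1)^2)⁻¹)
  have h1 := add_nat_ge ha j
  have h2 : (min a 1 * (1 + j))^2 ≤ (a + j)^2 := by
    apply sq_le_sq' <;> nlinarith [h1, hm.le, Nat.cast_nonneg (α := ℝ) j]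
  have h3 : 0 < (min a 1 * (1 + j))^2 := by positivity
  calc 1 / (a+j)^2 ≤ 1 / (min a 1 * (1+j))^2 := by
        apply one_div_le_one_div_of_le h3 h2
    _ = ((min a 1)^2)⁻¹ * (1 / ((j:ℝ)+1)^2) := by
        rw [mul_pow]
        rw [one_div, one_div, mul_inv]
        ring_nf
  

open Filter Topology Finset

noncomputable def cseq (θ : ℝ) (n : ℕ) : ℝ := Real.log n - ∑ j ∈ range (n+1), 1/(θ+j)

noncomputable def Lconst (θ : ℝ) : ℝ :=
  -Real.eulerMascheroniConstant - 1/θ + ∑' j : ℕ, (1/((j:ℝ)+1) - 1/(θ+j+1))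

lemma summable_tail {θ : ℝ} (hθ : 0 < θ) :
    Summable (fun j : ℕ => 1/((j:ℝ)+1) - 1/(θ+j+1)) := by
  have hs : Summable (fun j : ℕ => θ * (1 / ((j:ℝ)+1)^2)) := by
    have := Real.summable_one_div_nat_pow.mpr (le_refl 2)
    exact (((summable_nat_add_iff 1).mpr this).congr (fun j => by push_cast; ring)).mul_left θ
  refine Summable.of_nonneg_of_le (fun j => ?_) (fun j => ?_) hs
  · have h1 : (0:ℝ) < (j:ℝ)+1 := by positivity
    have h2 : ((j:ℝ)+1) ≤ θ+j+1 := by linarith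
    have := one_div_le_one_div_of_le h1 h2
    linarith
  · have h1 : (0:ℝ) < (j:ℝ)+1 := by positivity
    have h2 : (0:ℝ) < θ+(j:ℝ)+1 := by positivity
    rw [div_sub_div _ _ (ne_of_gt h1) (ne_of_gt h2)]
    have hnum : 1*(θ+(j:ℝ)+1) - ((j:ℝ)+1)*1 = θ := by ring
    rw [hnum]
    rw [mul_one_div]
    apply div_le_div_of_nonneg_left hθ.le (by positivity)
    nlinarith

lemma tendsto_cseq {θ : ℝ} (hθ : 0 < θ) : Tendsto (cseq θ) atTop (𝓝 (Lconst θ)) := by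
  have key : ∀ n : ℕ, cseq θ n
      = -(((harmonic n : ℝ)) - Real.log n) - 1/θ
        + ∑ j ∈ range n, (1/((j:ℝ)+1) - 1/(θ+j+1)) := by
    intro n
    have h1 : ∑ j ∈ range (n+1), 1/(θ+(j:ℝ)) = 1/θ + ∑ j ∈ range n, 1/(θ+(j:ℝ)+1) := by
      rw [Finset.sum_range_succ', add_comm]
      congr 1
      · norm_num
      · exact Finset.sum_congr rfl fun j _ => by push_cast; ring_nf
    have h2 : (harmonic n : ℝ) = ∑ j ∈ range n, 1/((j:ℝ)+1) := by
      rw [harmonic]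
      push_cast
      simp only [one_div]
    rw [cseq, h1, h2, Finset.sum_sub_distrib]
    ring
  rw [show Lconst θ = -(Real.eulerMascheroniConstant) - 1/θ
      + ∑' j : ℕ, (1/((j:ℝ)+1) - 1/(θ+j+1)) by rw [Lconst]]
  refine Tendsto.congr (fun n => (key n).symm) ?_
  refine Tendsto.add (Tendsto.sub_const ?_ _) ?_
  · exact (Real.tendsto_harmonic_sub_log).neg
  · exact (summable_tail hθ).hasSum.tendsto_sum_nat

lemma tendstoUniformlyOn_const_seq {c : ℕ → ℝ} {L : ℝ} (h : Tendsto c atTop (𝓝 L))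
    (s : Set ℝ) : TendstoUniformlyOn (fun n (_ : ℝ) => c n) (fun _ => L) atTop s := by
  rw [Metric.tendstoUniformlyOn_iff]
  intro ε hε
  have := Metric.tendsto_nhds.mp h ε hε
  filter_upwards [this] with n hn x _
  rw [dist_comm]
  exact hn

lemma TendstoUniformlyOn.index_succ {F : ℕ → ℝ → ℝ} {f : ℝ → ℝ} {s : Set ℝ}
    (h : TendstoUniformlyOn F f atTop s) :
    TendstoUniformlyOn (fun n => F (n+1)) f atTop s :=
  fun u hu => (tendsto_add_atTop_nat 1).eventually (h u hu)

noncomputable def Sreal (θ t : ℝ) : ℝ := ∑' j : ℕ, (1/(θ+(j:ℝ)) - 1/(t+j))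

lemma hasDerivAt_log_Gamma_real {θ : ℝ} (hθ : 0 < θ) {t : ℝ} (ht : 0 < t) :
    HasDerivAt (fun u => Real.log (Real.Gamma u)) (Lconst θ + Sreal θ t) t := by
  set s : Set ℝ := Set.Ioo (t/2) (t+1) with hs
  have hts : t ∈ s := ⟨by linarith, by linarith⟩
  have hopen : IsOpen s := isOpen_Ioo
  set f : ℕ → ℝ → ℝ := fun n u =>
    u * Real.log n + Real.log (n.factorial : ℝ) - ∑ j ∈ range (n+1), Real.log (u+j) with hf
  set f' : ℕ → ℝ → ℝ := fun n u =>
    cseq θ n + ∑ j ∈ range (n+1), (1/(θ+(j:ℝ)) - 1/(u+j)) with hf'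
  have hspos : ∀ u ∈ s, ∀ j : ℕ, 0 < u + (j:ℝ) := by
    intro u hu j
    have h := hu.1
    have hj : (0:ℝ) ≤ j := Nat.cast_nonneg j
    nlinarith [hu.1]
  have hder : ∀ n : ℕ, ∀ u ∈ s, HasDerivAt (f n) (f' n u) u := by
    intro n u hu
    have h1 : HasDerivAt (fun u : ℝ => u * Real.log n) (Real.log n) u := by
      simpa using (hasDerivAt_id u).mul_const (Real.log n)
    have h2 : HasDerivAt (fun u : ℝ => ∑ j ∈ range (n+1), Real.log (u+j))
        (∑ j ∈ range (n+1), 1/(u+j)) u := by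
      apply HasDerivAt.fun_sum
      intro j _
      have hpos := hspos u hu j
      have := ((hasDerivAt_id u).add_const (j:ℝ)).log hpos.ne'
      simpa using this
    have h3 := (h1.add_const (Real.log (n.factorial : ℝ))).sub h2
    refine h3.congr_deriv ?_
    simp only [hf', cseq]
    rw [Finset.sum_sub_distrib]
    ring
  have hunif : TendstoUniformlyOn f' (fun u => Lconst θ + Sreal θ u) atTop s := by
    have hconst := tendstoUniformlyOn_const_seq (tendsto_cseq hθ) s
    set C : ℝ := (t+1+θ) / (min θ 1 * min (t/2) 1) with hC
    have hM : Summable (fun j : ℕ => C * (1 / ((j:ℝ)+1)^2)) :=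
      summable_one_div_sq.mul_left _
    have hbound : ∀ (j : ℕ), ∀ u ∈ s, ‖1/(θ+(j:ℝ)) - 1/(u+j)‖ ≤ C * (1 / ((j:ℝ)+1)^2) := by
      intro j u hu
      have hθj : 0 < θ + (j:ℝ) := by positivity
      have huj : 0 < u + (j:ℝ) := hspos u hu j
      have hm1 : 0 < min θ 1 := lt_min hθ one_pos
      have hm2 : 0 < min (t/2) 1 := lt_min (by linarith) one_pos
      have heq : 1/(θ+(j:ℝ)) - 1/(u+j) = (u - θ)/((θ+j)*(u+j)) := by
        rw [div_sub_div _ _ hθj.ne' huj.ne']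
        congr 1
        ring
      rw [heq, Real.norm_eq_abs, abs_div, abs_of_pos (mul_pos hθj huj)]
      have h1 : |u - θ| ≤ t+1+θ := by
        rw [abs_le]
        constructor <;> nlinarith [hu.1, hu.2]
      have h2 : min θ 1 * (1+(j:ℝ)) ≤ θ + j := add_nat_ge hθ j
      have h3 : min (t/2) 1 * (1+(j:ℝ)) ≤ u + j := by
        have h5 := add_nat_ge (by linarith : (0:ℝ) < t/2) j
        have h4 : t/2 + j ≤ u + j := by nlinarith [hu.1]
        linarith
      have key : |u-θ| / ((θ+j)*(u+j))
          ≤ (t+1+θ) / (min θ 1 * min (t/2) 1 * (1+(j:ℝ))^2) := by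
        apply div_le_div₀ (by positivity) h1 (by positivity)
        nlinarith [mul_le_mul h2 h3 (by positivity) hθj.le]
      refine key.trans (le_of_eq ?_)
      rw [hC, div_mul_div_comm, mul_one]
      ring_nf
    have hser := (tendstoUniformlyOn_tsum_nat hM hbound).index_succ
    have := hconst.add hser
    exact this
  have hpt : ∀ u ∈ s, Tendsto (fun n => f n u) atTop (𝓝 (Real.log (Real.Gamma u))) := by
    intro u hu
    have hu0 : 0 < u := lt_trans (by linarith) hu.1
    have hlim := (Real.GammaSeq_tendsto_Gamma u).log (Real.Gamma_pos_of_pos hu0).ne'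
    refine Tendsto.congr' ?_ hlim
    filter_upwards [eventually_ge_atTop 1] with n hn
    have hnpos : (0:ℝ) < n := by exact_mod_cast hn
    have hujpos : ∀ j ∈ range (n+1), (0:ℝ) < u + j := by
      intro j _
      positivity
    have hprodpos : 0 < ∏ j ∈ range (n+1), (u+(j:ℝ)) :=
      Finset.prod_pos hujpos
    rw [Real.GammaSeq, Real.log_div (by positivity) hprodpos.ne',
      Real.log_mul (by positivity) (by positivity), Real.log_rpow hnpos,
      Real.log_prod (fun j hj => (hujpos j hj).ne')]
  exact hasDerivAt_of_tendstoUniformlyOn hopen hunif (Eventually.of_forall hder) hpt hts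


lemma summable_tau {θ t : ℝ} (hθ : 0 < θ) (ht : 0 < t) :
    Summable (fun j : ℕ => 1/(θ+(j:ℝ)) - 1/(t+j)) := by
  apply Summable.of_norm_bounded
    (summable_one_div_sq.mul_left (|t - θ| / (min θ 1 * min t 1)))
  intro j
  have hθj : 0 < θ + (j:ℝ) := by positivity
  have htj : 0 < t + (j:ℝ) := by positivity
  have hm1 : 0 < min θ 1 := lt_min hθ one_pos
  have hm2 : 0 < min t 1 := lt_min ht one_pos
  have heq : 1/(θ+(j:ℝ)) - 1/(t+j) = (t - θ)/((θ+j)*(t+j)) := by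
    rw [div_sub_div _ _ hθj.ne' htj.ne']
    congr 1
    ring
  rw [heq, Real.norm_eq_abs, abs_div, abs_of_pos (mul_pos hθj htj)]
  have h2 := add_nat_ge hθ j
  have h3 := add_nat_ge ht j
  have key : |t-θ| / ((θ+(j:ℝ))*(t+j))
      ≤ |t-θ| / (min θ 1 * min t 1 * (1+(j:ℝ))^2) := by
    apply div_le_div₀ (abs_nonneg _) le_rfl (by positivity)
    nlinarith [mul_le_mul h2 h3 (by positivity) hθj.le]
  refine key.trans (le_of_eq ?_)
  rw [div_mul_div_comm, mul_one]
  ring_nf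

lemma hasDerivAt_Sreal {θ : ℝ} (hθ : 0 < θ) :
    HasDerivAt (Sreal θ) (∑' j : ℕ, 1/(θ+(j:ℝ))^2) θ := by
  set s : Set ℝ := Set.Ioo (θ/2) (θ+1) with hs
  have hts : θ ∈ s := ⟨by linarith, by linarith⟩
  set f : ℕ → ℝ → ℝ := fun n t => ∑ j ∈ range n, (1/(θ+(j:ℝ)) - 1/(t+j)) with hf
  set f' : ℕ → ℝ → ℝ := fun n t => ∑ j ∈ range n, 1/((t+(j:ℝ))^2) with hf'
  have hspos : ∀ t ∈ s, ∀ j : ℕ, 0 < t + (j:ℝ) := by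
    intro t ht j
    have hj : (0:ℝ) ≤ j := Nat.cast_nonneg j
    nlinarith [ht.1]
  have hder : ∀ n : ℕ, ∀ t ∈ s, HasDerivAt (f n) (f' n t) t := by
    intro n t ht
    apply HasDerivAt.fun_sum
    intro j _
    have hpos := hspos t ht j
    have h := (((hasDerivAt_id t).add_const (j:ℝ)).inv hpos.ne').const_sub (1/(θ+(j:ℝ)))
    have h2 : -(1 / (t + (j:ℝ)) ^ 2) = -(1 * ((t+(j:ℝ))^2)⁻¹) := by
      rw [one_div]
      ring
    convert h using 1
    · funext u
      simp [one_div]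
    · rw [one_div]
      field_simp
      simp only [id]
      rw [div_self (pow_pos hpos 2).ne']
  have hunif : TendstoUniformlyOn f' (fun t => ∑' j : ℕ, 1/((t+(j:ℝ))^2)) atTop s := by
    apply tendstoUniformlyOn_tsum_nat (summable_inv_sq_add (by linarith : (0:ℝ) < θ/2))
    intro j t ht
    have h1 : 0 < θ/2 + (j:ℝ) := by positivity
    have h2 : θ/2 + (j:ℝ) ≤ t + j := by nlinarith [ht.1]
    rw [Real.norm_eq_abs, abs_of_pos (one_div_pos.mpr (pow_pos (hspos t ht j) 2))]
    apply one_div_le_one_div_of_le (by positivity)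
    nlinarith
  have hpt : ∀ t ∈ s, Tendsto (fun n => f n t) atTop (𝓝 (Sreal θ t)) := by
    intro t ht
    have ht0 : 0 < t := lt_trans (by linarith) ht.1
    exact (summable_tau hθ ht0).hasSum.tendsto_sum_nat
  have := hasDerivAt_of_tendstoUniformlyOn isOpen_Ioo hunif (Eventually.of_forall hder) hpt hts
  exact this

lemma digamma_eq {θ : ℝ} (hθ : 0 < θ) {t : ℝ} (ht : 0 < t) :
    digamma t = Lconst θ + Sreal θ t :=
  (hasDerivAt_log_Gamma_real hθ ht).deriv

lemma Sreal_self (θ : ℝ) : Sreal θ θ = 0 := by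
  simp [Sreal]

lemma digamma_self {θ : ℝ} (hθ : 0 < θ) : digamma θ = Lconst θ := by
  rw [digamma_eq hθ hθ, Sreal_self, add_zero]

lemma kappa_eq {θ : ℝ} (hθ : 0 < θ) : kappa θ = ∑' j : ℕ, 1/(θ+(j:ℝ))^2 := by
  have hev : digamma =ᶠ[nhds θ] fun t => Lconst θ + Sreal θ t := by
    filter_upwards [isOpen_Ioi.mem_nhds (Set.mem_Ioi.mpr hθ)] with t ht
    exact digamma_eq hθ ht
  rw [kappa, hev.deriv_eq]
  exact ((hasDerivAt_Sreal hθ).const_add (Lconst θ)).deriv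

set_option maxHeartbeats 1000000 in
lemma u_term_bound {θ y : ℝ} (hθ : 0 < θ) (hy : 0 < y) {x R : ℝ} (hR : |x - θ| ≤ R) (j : ℕ) :
    |1/(θ+(j:ℝ)) - (x+j)/((x+j)^2+y^2)|
      ≤ ((6*y*R + R^2 + y^2)/(2*y)) / (θ+(j:ℝ))^2 := by
  have hR0 : 0 ≤ R := le_trans (abs_nonneg _) hR
  have ha : 0 < θ + (j:ℝ) := by positivity
  set D : ℝ := (x+(j:ℝ))^2 + y^2 with hD
  have hDpos : 0 < D := by positivity
  have hid : 1/(θ+(j:ℝ)) - (x+j)/D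
      = ((x-θ)*D - (((x-θ)^2 - y^2)*(x+(j:ℝ)) + 2*(x-θ)*y^2))/((θ+(j:ℝ))^2*D) := by
    rw [hD]
    field_simp
    ring
  rw [hid, abs_div, abs_of_pos (by positivity : (0:ℝ) < (θ+(j:ℝ))^2*D)]
  have hR1 := abs_le.mp hR
  have hs1 : 2*y*(x+(j:ℝ)) ≤ D := by nlinarith [sq_nonneg (x+(j:ℝ)-y)]
  have hs2 : -D ≤ 2*y*(x+(j:ℝ)) := by nlinarith [sq_nonneg (x+(j:ℝ)+y)]
  have hy2 : y^2 ≤ D := by nlinarith [sq_nonneg (x+(j:ℝ))]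
  have hA1 : (x-θ)^2 - y^2 ≤ R^2 := by nlinarith [hR1.1, hR1.2]
  have hA2 : -(R^2+y^2) ≤ (x-θ)^2 - y^2 := by nlinarith [sq_nonneg (x-θ)]
  have h1 : ((R^2+y^2) + ((x-θ)^2 - y^2)) * (D + 2*y*(x+(j:ℝ))) ≥ 0 :=
    mul_nonneg (by nlinarith) (by linarith)
  have h2 : ((R^2+y^2) - ((x-θ)^2 - y^2)) * (D - 2*y*(x+(j:ℝ))) ≥ 0 :=
    mul_nonneg (by nlinarith) (by linarith)
  have h3 : ((R^2+y^2) + ((x-θ)^2 - y^2)) * (D - 2*y*(x+(j:ℝ))) ≥ 0 :=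
    mul_nonneg (by nlinarith) (by linarith)
  have h4 : ((R^2+y^2) - ((x-θ)^2 - y^2)) * (D + 2*y*(x+(j:ℝ))) ≥ 0 :=
    mul_nonneg (by nlinarith) (by linarith)
  have h5 : (R - (x-θ))*D ≥ 0 := mul_nonneg (by linarith) hDpos.le
  have h6 : (R + (x-θ))*D ≥ 0 := mul_nonneg (by linarith) hDpos.le
  have h9 : (R - (x-θ))*(D - y^2) ≥ 0 := mul_nonneg (by linarith) (by nlinarith)
  have h10 : (R + (x-θ))*(D - y^2) ≥ 0 := mul_nonneg (by linarith) (by nlinarith)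
  have h11 : (R + (x-θ))*y^2 ≥ 0 := mul_nonneg (by linarith) (by positivity)
  have h12 : (R - (x-θ))*y^2 ≥ 0 := mul_nonneg (by linarith) (by positivity)
  have hub : 2*y*((x-θ)*D - (((x-θ)^2 - y^2)*(x+(j:ℝ)) + 2*(x-θ)*y^2))
      ≤ (6*y*R + R^2 + y^2)*D := by nlinarith [h1, h2, h5, h10, h12, mul_pos hy hDpos]
  have hlb : -((6*y*R + R^2 + y^2)*D)
      ≤ 2*y*((x-θ)*D - (((x-θ)^2 - y^2)*(x+(j:ℝ)) + 2*(x-θ)*y^2)) := by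
    nlinarith [h3, h4, h6, h9, h11, mul_pos hy hDpos]
  have habs : |2*y*((x-θ)*D - (((x-θ)^2 - y^2)*(x+(j:ℝ)) + 2*(x-θ)*y^2))|
      ≤ (6*y*R + R^2 + y^2)*D := abs_le.mpr ⟨hlb, hub⟩
  have hkey : |(x-θ)*D - (((x-θ)^2 - y^2)*(x+(j:ℝ)) + 2*(x-θ)*y^2)| * (2*y)
      ≤ (6*y*R + R^2 + y^2)*D := by
    calc |(x-θ)*D - (((x-θ)^2 - y^2)*(x+(j:ℝ)) + 2*(x-θ)*y^2)| * (2*y)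
        = |2*y*((x-θ)*D - (((x-θ)^2 - y^2)*(x+(j:ℝ)) + 2*(x-θ)*y^2))| := by
          rw [abs_mul, abs_of_pos (by linarith : (0:ℝ) < 2*y)]
          ring
      _ ≤ _ := habs
  rw [div_le_div_iff₀ (by positivity) (by positivity),
    ← mul_le_mul_iff_of_pos_right (show (0:ℝ) < 2*y by linarith)]
  have heq2 : (6*y*R+R^2+y^2)/(2*y)*((θ+(j:ℝ))^2*D)*(2*y)
      = (6*y*R+R^2+y^2)*D*(θ+(j:ℝ))^2 := by
    field_simp
  rw [heq2]
  calc |(x-θ)*D - (((x-θ)^2 - y^2)*(x+(j:ℝ)) + 2*(x-θ)*y^2)| * (θ+(j:ℝ))^2 * (2*y)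
      = |(x-θ)*D - (((x-θ)^2 - y^2)*(x+(j:ℝ)) + 2*(x-θ)*y^2)| * (2*y) * (θ+(j:ℝ))^2 := by
        ring
    _ ≤ (6*y*R + R^2 + y^2)*D*(θ+(j:ℝ))^2 :=
        mul_le_mul_of_nonneg_right hkey (sq_nonneg _)

noncomputable def Scomp (θ y x : ℝ) : ℝ :=
  ∑' j : ℕ, (1/(θ+(j:ℝ)) - (x+j)/((x+j)^2+y^2))

lemma summable_u {θ y : ℝ} (hθ : 0 < θ) (hy : 0 < y) (x : ℝ) :
    Summable (fun j : ℕ => 1/(θ+(j:ℝ)) - (x+j)/((x+j)^2+y^2)) := by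
  apply Summable.of_norm_bounded
    (((summable_inv_sq_add hθ)).mul_left ((6*y*|x-θ| + |x-θ|^2 + y^2)/(2*y)))
  intro j
  have := u_term_bound hθ hy (le_refl |x - θ|) j
  rw [Real.norm_eq_abs]
  calc |1/(θ+(j:ℝ)) - (x+j)/((x+j)^2+y^2)|
      ≤ ((6*y*|x-θ| + |x-θ|^2 + y^2)/(2*y)) / (θ+(j:ℝ))^2 := this
    _ = (6*y*|x-θ| + |x-θ|^2 + y^2)/(2*y) * (1/(θ+(j:ℝ))^2) := by
        rw [mul_one_div]
  
lemma z_ne_neg_nat {y : ℝ} (hy : 0 < y) (x : ℝ) (m : ℕ) :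
    (x:ℂ) + (y:ℂ)*Complex.I ≠ -(m:ℂ) := by
  intro h
  have := congrArg Complex.im h
  simp at this
  linarith

lemma abs_z_add {x y : ℝ} (j : ℕ) :
    ‖(x:ℂ) + (y:ℂ)*Complex.I + (j:ℂ)‖ = Real.sqrt ((x+j)^2 + y^2) := by
  rw [Complex.norm_def]
  congr 1
  rw [Complex.normSq_apply]
  simp
  ring

lemma hasDerivAt_Fline {θ y : ℝ} (hθ : 0 < θ) (hy : 0 < y) (x₀ : ℝ) :
    HasDerivAt (fun x : ℝ => Real.log (‖Complex.Gamma ((x:ℂ) + (y:ℂ)*Complex.I)‖))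
      (Lconst θ + Scomp θ y x₀) x₀ := by
  set s : Set ℝ := Set.Ioo (x₀-1) (x₀+1) with hs
  have hts : x₀ ∈ s := ⟨by linarith, by linarith⟩
  set f : ℕ → ℝ → ℝ := fun n x =>
    x * Real.log n + Real.log (n.factorial : ℝ)
      - (∑ j ∈ range (n+1), Real.log ((x+(j:ℝ))^2+y^2))/2 with hf
  set f' : ℕ → ℝ → ℝ := fun n x =>
    cseq θ n + ∑ j ∈ range (n+1), (1/(θ+(j:ℝ)) - (x+j)/((x+j)^2+y^2)) with hf'
  have hDpos : ∀ (x : ℝ) (j : ℕ), 0 < (x+(j:ℝ))^2+y^2 := fun x j => by positivity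
  have hder : ∀ n : ℕ, ∀ x ∈ s, HasDerivAt (f n) (f' n x) x := by
    intro n x _
    have h1 : HasDerivAt (fun x : ℝ => x * Real.log n) (Real.log n) x := by
      simpa using (hasDerivAt_id x).mul_const (Real.log n)
    have h2 : HasDerivAt (fun x : ℝ => ∑ j ∈ range (n+1), Real.log ((x+(j:ℝ))^2+y^2))
        (∑ j ∈ range (n+1), 2*(x+(j:ℝ))/((x+(j:ℝ))^2+y^2)) x := by
      apply HasDerivAt.fun_sum
      intro j _
      have hD := hDpos x j
      have hq : HasDerivAt (fun x : ℝ => (x+(j:ℝ))^2+y^2) (2*(x+(j:ℝ))) x := by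
        have := (((hasDerivAt_id x).add_const (j:ℝ)).pow 2).add_const (y^2)
        simpa using this
      simpa using hq.log hD.ne'
    have h3 := (h1.add_const (Real.log (n.factorial : ℝ))).sub (h2.div_const 2)
    refine h3.congr_deriv ?_
    simp only [hf', cseq]
    have hsum : ∑ j ∈ range (n+1), 2*(x+(j:ℝ))/((x+(j:ℝ))^2+y^2)
        = 2 * ∑ j ∈ range (n+1), (x+(j:ℝ))/((x+(j:ℝ))^2+y^2) := by
      rw [Finset.mul_sum]
      exact Finset.sum_congr rfl fun j _ => by rw [mul_div_assoc]
    rw [Finset.sum_sub_distrib, hsum]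
    ring
  have hunif : TendstoUniformlyOn f' (fun x => Lconst θ + Scomp θ y x) atTop s := by
    have hconst := tendstoUniformlyOn_const_seq (tendsto_cseq hθ) s
    set R : ℝ := |x₀| + 1 + θ with hR
    have hM : Summable (fun j : ℕ => ((6*y*R + R^2 + y^2)/(2*y)) * (1/(θ+(j:ℝ))^2)) :=
      (summable_inv_sq_add hθ).mul_left _
    have hbound : ∀ (j : ℕ), ∀ x ∈ s,
        ‖1/(θ+(j:ℝ)) - (x+j)/((x+j)^2+y^2)‖ ≤ ((6*y*R + R^2 + y^2)/(2*y)) * (1/(θ+(j:ℝ))^2) := by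
      intro j x hx
      have hxR : |x - θ| ≤ R := by
        rw [abs_le]
        have h1 := hx.1
        have h2 := hx.2
        have h3 := abs_nonneg x₀
        have h4 := le_abs_self x₀
        have h5 := neg_abs_le x₀
        constructor <;> [nlinarith; nlinarith]
      have := u_term_bound hθ hy hxR j
      rw [Real.norm_eq_abs]
      refine this.trans (le_of_eq ?_)
      rw [mul_one_div]
    have hser := (tendstoUniformlyOn_tsum_nat hM hbound).index_succ
    exact hconst.add hser
  have hpt : ∀ x ∈ s, Tendsto (fun n => f n x) atTop
      (𝓝 (Real.log (‖Complex.Gamma ((x:ℂ) + (y:ℂ)*Complex.I)‖))) := by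
    intro x _
    set z : ℂ := (x:ℂ) + (y:ℂ)*Complex.I with hz
    have hGne : Complex.Gamma z ≠ 0 := Complex.Gamma_ne_zero (z_ne_neg_nat hy x)
    have habs : ‖Complex.Gamma z‖ ≠ 0 := by
      simpa using hGne
    have hlim : Tendsto (fun n => Real.log (‖Complex.GammaSeq z n‖)) atTop
        (𝓝 (Real.log (‖Complex.Gamma z‖))) := by
      apply Filter.Tendsto.log _ habs
      exact (continuous_norm.tendsto _).comp (Complex.GammaSeq_tendsto_Gamma z)
    refine Tendsto.congr' ?_ hlim
    filter_upwards [eventually_ge_atTop 1] with n hn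
    have hnpos : (0:ℝ) < n := by exact_mod_cast hn
    have hzj : ∀ j : ℕ, ‖z + (j:ℂ)‖ = Real.sqrt ((x+(j:ℝ))^2 + y^2) :=
      fun j => abs_z_add j
    have hzjpos : ∀ j : ℕ, 0 < ‖z + (j:ℂ)‖ := by
      intro j
      rw [hzj j]
      exact Real.sqrt_pos.mpr (hDpos x j)
    have hprodpos : 0 < ∏ j ∈ range (n+1), ‖z + (j:ℂ)‖ :=
      Finset.prod_pos fun j _ => hzjpos j
    have habsSeq : ‖Complex.GammaSeq z n‖
        = (n:ℝ)^x * (n.factorial : ℝ) / ∏ j ∈ range (n+1), ‖z + (j:ℂ)‖ := by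
      rw [Complex.GammaSeq, norm_div, norm_mul, norm_prod]
      congr 2
      · rw [show ((n:ℂ)) = (((n:ℝ)):ℂ) by push_cast; rfl,
          Complex.norm_cpow_eq_rpow_re_of_pos hnpos]
        congr 1
        simp [hz]
      · simp
    rw [habsSeq, Real.log_div (by positivity) hprodpos.ne',
      Real.log_mul (by positivity) (by positivity), Real.log_rpow hnpos,
      Real.log_prod (fun j hj => (hzjpos j).ne')]
    have hlogz : ∀ j ∈ range (n+1),
        Real.log (‖z + (j:ℂ)‖) = Real.log ((x+(j:ℝ))^2+y^2) / 2 := by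
      intro j _
      rw [hzj j, Real.log_sqrt (hDpos x j).le]
    rw [Finset.sum_congr rfl hlogz, ← Finset.sum_div]
  exact hasDerivAt_of_tendstoUniformlyOn isOpen_Ioo hunif (Eventually.of_forall hder) hpt hts




lemma term_identity {θ y k : ℝ} (hθ : 0 < θ) (hy : 0 < y) (n : ℕ) :
    (1/(θ+(n:ℝ)) - ((θ-y+k)+n)/(((θ-y+k)+n)^2+y^2)) + (θ-(θ-y+k))*(1/(θ+(n:ℝ))^2)
      = ((θ + n) * (y ^ 2 - (k - y) ^ 2) + (y - k) ^ 3 + y ^ 2 * (y - k))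
            / ((θ + n) ^ 2 * ((θ + n - y + k) ^ 2 + y ^ 2)) := by
  have h1 : (0:ℝ) < θ + n := by positivity
  have h2 : (0:ℝ) < ((θ-y+k)+(n:ℝ))^2+y^2 := by positivity
  have h3 : ((θ:ℝ) + n - y + k)^2 + y^2 = ((θ-y+k)+(n:ℝ))^2+y^2 := by ring
  rw [h3]
  field_simp
  ring

lemma summable_target {θ y : ℝ} (hθ : 0 < θ) (hy : 0 < y) (k : ℝ) :
    Summable (fun n : ℕ => ((θ + n) * (y ^ 2 - (k - y) ^ 2) + (y - k) ^ 3 + y ^ 2 * (y - k))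
            / ((θ + n) ^ 2 * ((θ + n - y + k) ^ 2 + y ^ 2))) := by
  have h := (summable_u hθ hy (θ-y+k)).add
    ((summable_inv_sq_add hθ).mul_left (θ-(θ-y+k)))
  exact h.congr (fun n => term_identity hθ hy n)

lemma hasDerivAt_hFun {θ y : ℝ} (hθ : 0 < θ) (hy : 0 < y) (k : ℝ) :
    HasDerivAt (fun k => hFun θ y k)
      (-(∑' n : ℕ, ((θ + n) * (y ^ 2 - (k - y) ^ 2) + (y - k) ^ 3 + y ^ 2 * (y - k))
            / ((θ + n) ^ 2 * ((θ + n - y + k) ^ 2 + y ^ 2)))) k := by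
  set x : ℝ := θ - y + k with hx
  have hgF : ∀ u : ℝ, gFun θ u y
      = Real.log (‖Complex.Gamma ((u:ℂ) + (y:ℂ)*Complex.I)‖)
        + fTheta θ * u - kappa θ/2*(u^2-y^2) := by
    intro u
    rw [gFun, Complex.log_re]
  have h1 := hasDerivAt_Fline hθ hy x
  have h2 : HasDerivAt (fun u : ℝ => fTheta θ * u) (fTheta θ) x := by
    simpa using (hasDerivAt_id x).const_mul (fTheta θ)
  have h3 : HasDerivAt (fun u : ℝ => kappa θ/2*(u^2-y^2)) (kappa θ * x) x := by
    have := ((hasDerivAt_pow 2 x).sub_const (y^2)).const_mul (kappa θ/2)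
    refine this.congr_deriv ?_
    rw [show (2:ℕ) - 1 = 1 from rfl, pow_one]
    push_cast
    ring
  have hG := (h1.add h2).sub h3
  have hinner : HasDerivAt (fun k : ℝ => θ - y + k) 1 k := (hasDerivAt_id k).const_add (θ-y)
  have hcomp' := HasDerivAt.comp k (hx ▸ hG) hinner
  have hcomp : HasDerivAt (fun k : ℝ => gFun θ (θ-y+k) y)
      ((Lconst θ + Scomp θ y x + fTheta θ - kappa θ * x)) k := by
    have heq : (fun k : ℝ => gFun θ (θ-y+k) y)
        = ((fun u : ℝ => Real.log (‖Complex.Gamma ((u:ℂ) + (y:ℂ)*Complex.I)‖)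
            + fTheta θ * u - kappa θ/2*(u^2-y^2)) ∘ (fun k : ℝ => θ - y + k)) :=
      funext fun k => hgF _
    rw [heq]
    exact hcomp'.congr_deriv (mul_one _)
  have hmain : HasDerivAt (fun k => hFun θ y k)
      (0 - (Lconst θ + Scomp θ y x + fTheta θ - kappa θ * x)) k := by
    simp only [hFun]
    exact (hasDerivAt_const k (gFun θ (θ-y) y)).sub hcomp
  convert hmain using 1
  have hfT : fTheta θ = θ * kappa θ - Lconst θ := by
    rw [fTheta, kappa, digamma_self hθ]
  have hsum : Scomp θ y x + (θ-x)*(∑' j : ℕ, 1/(θ+(j:ℝ))^2)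
      = ∑' n : ℕ, ((θ + n) * (y ^ 2 - (k - y) ^ 2) + (y - k) ^ 3 + y ^ 2 * (y - k))
            / ((θ + n) ^ 2 * ((θ + n - y + k) ^ 2 + y ^ 2)) := by
    rw [Scomp, ← tsum_mul_left,
      ← Summable.tsum_add (summable_u hθ hy x) ((summable_inv_sq_add hθ).mul_left (θ-x))]
    exact tsum_congr fun n => term_identity hθ hy n
  rw [← hsum, hfT, kappa_eq hθ]
  ring

/-- For `θ > 0` and fixed `y > 0`: `h(y,0) = 0`, the derivative in `k` is
`-Σ_{n=0}^∞ ((θ+n)(y²-(k-y)²) + (y-k)³ + y²(y-k)) / ((θ+n)²((θ+n-y+k)²+y²))`,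
and `h(y,·)` is strictly decreasing on `[0,y]`. -/
theorem hFun_deriv_and_strictAnti (θ : ℝ) (hθ : 0 < θ) (y : ℝ) (hy : 0 < y) :
    hFun θ y 0 = 0
    ∧ (∀ k : ℝ, HasDerivAt (fun k => hFun θ y k)
        (-(∑' n : ℕ, ((θ + n) * (y ^ 2 - (k - y) ^ 2) + (y - k) ^ 3 + y ^ 2 * (y - k))
            / ((θ + n) ^ 2 * ((θ + n - y + k) ^ 2 + y ^ 2)))) k)
    ∧ StrictAntiOn (fun k => hFun θ y k) (Set.Icc 0 y) := by
  refine ⟨by simp [hFun], fun k => hasDerivAt_hFun hθ hy k, ?_⟩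
  have hcont : Continuous (fun k => hFun θ y k) :=
    continuous_iff_continuousAt.mpr fun k => (hasDerivAt_hFun hθ hy k).continuousAt
  apply strictAntiOn_of_deriv_neg (convex_Icc 0 y) hcont.continuousOn
  intro k hk
  rw [interior_Icc] at hk
  rw [(hasDerivAt_hFun hθ hy k).deriv, neg_lt_zero]
  have hknum : ∀ n : ℕ, 0 ≤ ((θ + (n:ℝ)) * (y ^ 2 - (k - y) ^ 2) + (y - k) ^ 3 + y ^ 2 * (y - k)) := by
    intro n
    have h1 : (0:ℝ) < θ + n := by positivity
    have h2 : (k - y)^2 ≤ y^2 := by nlinarith [hk.1, hk.2]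
    have h3 : (0:ℝ) ≤ y - k := by linarith [hk.2]
    have h4 : (0:ℝ) ≤ (y-k)^3 := by positivity
    nlinarith
  apply Summable.tsum_pos (summable_target hθ hy k) (fun n => ?_) 0
  · -- strict positivity at n = 0
    have h1 : (0:ℝ) < θ + (0:ℕ) := by simp [hθ]
    have h2 : (k - y)^2 < y^2 := by nlinarith [hk.1, hk.2]
    have h3 : (0:ℝ) < y - k := by linarith [hk.2]
    apply div_pos
    · push_cast
      nlinarith [hθ]
    · exact mul_pos (pow_pos h1 2)
        (add_pos_of_nonneg_of_pos (sq_nonneg _) (pow_pos hy 2))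
  · apply div_nonneg (hknum n)
    positivity
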